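/- Let m, n ≥ 3 be odd integers, let ζ_k = e^{2πi/k}, let J = [[0,1],[−1,0]], A = diag(ζ₄ₙ², ζ₄ₙ⁻²), B = diag(ζ₄ₘ², ζ₄ₘ⁻²), C = diag(ζ₄ₙⁿ, ζ₄ₙ⁻ⁿ), D = diag(ζ₄ₘᵐ, ζ₄ₘ⁻ᵐ), and identify ℂ⁴ with ℂ² ⊗ ℂ², with GL(2,ℂ) × GL(2,ℂ) acting via Kronecker products X ⊗ Y. Then: (1) the subgroup G₁ ≤ GL(4,ℂ) generated by A ⊗ I, I ⊗ B, C ⊗ D and J ⊗ J acts reducibly on ℂ⁴ — indeed it preserves the two-dimensional subspaces span{e₁⊗e₂, e₂⊗e₁} and span{e₁⊗e₁, e₂⊗e₂}; whereas (2) the subgroup G₂ ≤ GL(4,ℂ) generated by A ⊗ I, I ⊗ B, C ⊗ J and J ⊗ D acts irreducibly on ℂ⁴. -/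

import Mathlib

open Matrix Kronecker

noncomputable def zeta (k : ℕ) : ℂ := Complex.exp (2 * Real.pi * Complex.I / k)

/-- `A = diag(ζ₄ₙ², ζ₄ₙ⁻²)` (and `B = diag(ζ₄ₘ², ζ₄ₘ⁻²)` is `Amat m`). -/
noncomputable def Amat (n : ℕ) : Matrix (Fin 2) (Fin 2) ℂ :=
  Matrix.diagonal ![zeta (4 * n) ^ 2, (zeta (4 * n) ^ 2)⁻¹]

/-- `C = diag(ζ₄ₙⁿ, ζ₄ₙ⁻ⁿ)` (and `D = diag(ζ₄ₘᵐ, ζ₄ₘ⁻ᵐ)` is `Cmat m`). -/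
noncomputable def Cmat (n : ℕ) : Matrix (Fin 2) (Fin 2) ℂ :=
  Matrix.diagonal ![zeta (4 * n) ^ n, (zeta (4 * n) ^ n)⁻¹]

def Jmat : Matrix (Fin 2) (Fin 2) ℂ := !![0, 1; -1, 0]

/-- The group of Example `eg:intrans`: generated by `A ⊗ I`, `I ⊗ B`, `C ⊗ D`, `J ⊗ J`. -/
noncomputable def intransGroup (m n : ℕ) : Subgroup (GL (Fin 2 × Fin 2) ℂ) :=
  Subgroup.closure
    {g | (g : Matrix (Fin 2 × Fin 2) (Fin 2 × Fin 2) ℂ) = Amat n ⊗ₖ (1 : Matrix (Fin 2) (Fin 2) ℂ) ∨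
      (g : Matrix (Fin 2 × Fin 2) (Fin 2 × Fin 2) ℂ) = (1 : Matrix (Fin 2) (Fin 2) ℂ) ⊗ₖ Amat m ∨
      (g : Matrix (Fin 2 × Fin 2) (Fin 2 × Fin 2) ℂ) = Cmat n ⊗ₖ Cmat m ∨
      (g : Matrix (Fin 2 × Fin 2) (Fin 2 × Fin 2) ℂ) = Jmat ⊗ₖ Jmat}

/-- The group of Example `eg:trans`: generated by `A ⊗ I`, `I ⊗ B`, `C ⊗ J`, `J ⊗ D`. -/
noncomputable def transGroup (m n : ℕ) : Subgroup (GL (Fin 2 × Fin 2) ℂ) :=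
  Subgroup.closure
    {g | (g : Matrix (Fin 2 × Fin 2) (Fin 2 × Fin 2) ℂ) = Amat n ⊗ₖ (1 : Matrix (Fin 2) (Fin 2) ℂ) ∨
      (g : Matrix (Fin 2 × Fin 2) (Fin 2 × Fin 2) ℂ) = (1 : Matrix (Fin 2) (Fin 2) ℂ) ⊗ₖ Amat m ∨
      (g : Matrix (Fin 2 × Fin 2) (Fin 2 × Fin 2) ℂ) = Cmat n ⊗ₖ Jmat ∨
      (g : Matrix (Fin 2 × Fin 2) (Fin 2 × Fin 2) ℂ) = Jmat ⊗ₖ Cmat m}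

/-! ### Auxiliary lemmas -/

lemma zeta_ne_zero (k : ℕ) : zeta k ≠ 0 := Complex.exp_ne_zero _

lemma zeta_pow_ne_one {n k : ℕ} (hn : 2 ≤ n) (hk : k ≠ 0) (hkn : k < 4 * n) :
    zeta (4 * n) ^ k ≠ 1 := by
  intro h
  rw [zeta, ← Complex.exp_nat_mul, Complex.exp_eq_one_iff] at h
  obtain ⟨j, hj⟩ := h
  have h4n : ((4 : ℂ) * n) ≠ 0 := by
    have : (n : ℂ) ≠ 0 := Nat.cast_ne_zero.mpr (by omega)
    simp [this]
  have hpi : (2 * (Real.pi : ℂ) * Complex.I) ≠ 0 := by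
    simp [Real.pi_ne_zero, Complex.I_ne_zero]
  push_cast at hj
  field_simp [h4n] at hj
  have hfac : ((k : ℂ) - j * (4 * n)) * (2 * Real.pi * Complex.I) = 0 := by
    rw [div_eq_iff (by exact_mod_cast (show n ≠ 0 by omega))] at hj
    linear_combination (2 * Real.pi * Complex.I) * hj
  have hc : (k : ℂ) = j * (4 * n) := by
    rcases mul_eq_zero.mp hfac with h | h
    · exact sub_eq_zero.mp h
    · exact absurd h hpi
  have hz : (k : ℤ) = j * (4 * n) := by exact_mod_cast hc
  have hdvd : ((4 * n : ℕ) : ℤ) ∣ (k : ℤ) := ⟨j, by rw [hz]; push_cast; ring⟩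
  have := Int.le_of_dvd (by exact_mod_cast Nat.pos_of_ne_zero hk) hdvd
  have : (4 * n : ℕ) ≤ k := by exact_mod_cast this
  omega

lemma zeta_pow_self (n : ℕ) (hn : n ≠ 0) : zeta (4 * n) ^ n = Complex.I := by
  rw [zeta, ← Complex.exp_nat_mul]
  have hn' : (n : ℂ) ≠ 0 := Nat.cast_ne_zero.mpr hn
  have h : (n : ℂ) * (2 * Real.pi * Complex.I / (4 * n : ℕ)) = (Real.pi / 2 : ℝ) * Complex.I := by
    push_cast
    field_simp
    ring
  rw [h, Complex.exp_mul_I]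
  rw [← Complex.ofReal_cos, ← Complex.ofReal_sin, Real.cos_pi_div_two, Real.sin_pi_div_two]
  simp

lemma Cmat_eq (n : ℕ) (hn : n ≠ 0) :
    Cmat n = Matrix.diagonal ![Complex.I, -Complex.I] := by
  rw [Cmat, zeta_pow_self n hn, Complex.inv_I]

abbrev V4 := Fin 2 × Fin 2 → ℂ

/-- The stabilizer of a submodule inside the general linear group. -/
def stab (W : Submodule ℂ V4) : Subgroup (GL (Fin 2 × Fin 2) ℂ) where
  carrier := {g | ∀ v ∈ W, (g : Matrix (Fin 2 × Fin 2) (Fin 2 × Fin 2) ℂ) *ᵥ v ∈ W}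
  one_mem' := by intro v hv; simpa using hv
  mul_mem' := by
    intro a b ha hb v hv
    have := ha _ (hb v hv)
    simpa [Matrix.mulVec_mulVec] using this
  inv_mem' := by
    intro g hg v hv
    set M : Matrix (Fin 2 × Fin 2) (Fin 2 × Fin 2) ℂ := (g : Matrix (Fin 2 × Fin 2) (Fin 2 × Fin 2) ℂ)
    set Mi : Matrix (Fin 2 × Fin 2) (Fin 2 × Fin 2) ℂ := ((g⁻¹ : GL (Fin 2 × Fin 2) ℂ) : Matrix (Fin 2 × Fin 2) (Fin 2 × Fin 2) ℂ)
    have hMiM : Mi * M = 1 := by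
      show (g⁻¹ : GL (Fin 2 × Fin 2) ℂ).val * g.val = 1
      rw [← Units.val_mul, inv_mul_cancel, Units.val_one]
    let f : W →ₗ[ℂ] W := (Matrix.mulVecLin M).restrict (fun x hx => by
      simpa [Matrix.mulVecLin_apply] using hg x hx)
    have hinj : Function.Injective f := by
      intro a b hab
      have h2 : M *ᵥ (a : V4) = M *ᵥ (b : V4) := by
        have := congrArg (Subtype.val) hab
        simpa [f, LinearMap.restrict_apply, Matrix.mulVecLin_apply] using this
      have h3 := congrArg (fun w => Mi *ᵥ w) h2
      simp only [Matrix.mulVec_mulVec, hMiM, Matrix.one_mulVec] at h3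
      exact Subtype.ext h3
    have hsurj := LinearMap.injective_iff_surjective.mp hinj
    obtain ⟨w, hw⟩ := hsurj ⟨v, hv⟩
    have hw' : M *ᵥ (w : V4) = v := by
      have := congrArg (Subtype.val) hw
      simpa [f, LinearMap.restrict_apply, Matrix.mulVecLin_apply] using this
    have : Mi *ᵥ v = (w : V4) := by
      rw [← hw', Matrix.mulVec_mulVec, hMiM, Matrix.one_mulVec]
    exact this ▸ w.2

lemma mem_span_offdiag (w : V4) :
    w ∈ Submodule.span ℂ {Pi.single ((0 : Fin 2), (1 : Fin 2)) (1 : ℂ),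
      Pi.single ((1 : Fin 2), (0 : Fin 2)) 1} ↔ w (0, 0) = 0 ∧ w (1, 1) = 0 := by
  rw [Submodule.mem_span_pair]
  constructor
  · rintro ⟨a, b, rfl⟩
    constructor <;> simp [Pi.single_apply]
  · rintro ⟨h1, h2⟩
    refine ⟨w (0, 1), w (1, 0), ?_⟩
    funext q
    fin_cases q <;> simp [Pi.single_apply] <;> first | exact h1.symm | exact h2.symm

lemma mem_span_diag (w : V4) :
    w ∈ Submodule.span ℂ {Pi.single ((0 : Fin 2), (0 : Fin 2)) (1 : ℂ),
      Pi.single ((1 : Fin 2), (1 : Fin 2)) 1} ↔ w (0, 1) = 0 ∧ w (1, 0) = 0 := by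
  rw [Submodule.mem_span_pair]
  constructor
  · rintro ⟨a, b, rfl⟩
    constructor <;> simp [Pi.single_apply]
  · rintro ⟨h1, h2⟩
    refine ⟨w (0, 0), w (1, 1), ?_⟩
    funext q
    fin_cases q <;> simp [Pi.single_apply] <;> first | exact h1.symm | exact h2.symm

lemma intrans_le_stab_offdiag (m n : ℕ) :
    intransGroup m n ≤ stab (Submodule.span ℂ {Pi.single ((0 : Fin 2), (1 : Fin 2)) (1 : ℂ),
      Pi.single ((1 : Fin 2), (0 : Fin 2)) 1}) := by
  rw [intransGroup, Subgroup.closure_le]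
  rintro g (h | h | h | h) <;>
  · intro v hv
    rw [mem_span_offdiag] at hv
    obtain ⟨h1, h2⟩ := hv
    rw [mem_span_offdiag, h]
    constructor <;>
      simp [Matrix.mulVec, dotProduct, Fintype.sum_prod_type, Fin.sum_univ_two,
        Matrix.kroneckerMap_apply, Amat, Cmat, Jmat, Matrix.diagonal, Matrix.one_apply,
        h1, h2, show v 0 = 0 from h1, show v 1 = 0 from h2]

lemma intrans_le_stab_diag (m n : ℕ) :
    intransGroup m n ≤ stab (Submodule.span ℂ {Pi.single ((0 : Fin 2), (0 : Fin 2)) (1 : ℂ),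
      Pi.single ((1 : Fin 2), (1 : Fin 2)) 1}) := by
  rw [intransGroup, Subgroup.closure_le]
  rintro g (h | h | h | h) <;>
  · intro v hv
    rw [mem_span_diag] at hv
    obtain ⟨h1, h2⟩ := hv
    rw [mem_span_diag, h]
    constructor <;>
      simp [Matrix.mulVec, dotProduct, Fintype.sum_prod_type, Fin.sum_univ_two,
        Matrix.kroneckerMap_apply, Amat, Cmat, Jmat, Matrix.diagonal, Matrix.one_apply, h1, h2]

lemma single_one_mem_of_single_mem {W : Submodule ℂ V4} {s : ℂ} (hs : s ≠ 0)
    {q : Fin 2 × Fin 2} (h : Pi.single q s ∈ W) : Pi.single q (1 : ℂ) ∈ W := by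
  have he : Pi.single q (1 : ℂ) = s⁻¹ • (Pi.single q s : V4) := by
    funext r
    by_cases hr : r = q <;> simp [Pi.single_apply, hr, inv_mul_cancel₀ hs]
  rw [he]
  exact W.smul_mem _ h


lemma pow_sq_ne_inv {k : ℕ} (hk : 3 ≤ k) : zeta (4 * k) ^ 2 ≠ (zeta (4 * k) ^ 2)⁻¹ := by
  intro h
  have h0 : zeta (4 * k) ^ 2 ≠ 0 := pow_ne_zero _ (zeta_ne_zero _)
  have h1 : zeta (4 * k) ^ 4 = 1 := by
    have : zeta (4 * k) ^ 2 * zeta (4 * k) ^ 2 = 1 := by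
      nth_rewrite 2 [h]
      exact mul_inv_cancel₀ h0
    calc zeta (4 * k) ^ 4 = zeta (4 * k) ^ 2 * zeta (4 * k) ^ 2 := by ring
    _ = 1 := this
  exact zeta_pow_ne_one (by omega) (by norm_num) (by omega) h1

lemma trans_irred (m n : ℕ) (hm : 3 ≤ m) (hn : 3 ≤ n) :
    ∀ W : Submodule ℂ (Fin 2 × Fin 2 → ℂ),
      (∀ g ∈ transGroup m n, ∀ v ∈ W,
        Matrix.mulVec (g : Matrix (Fin 2 × Fin 2) (Fin 2 × Fin 2) ℂ) v ∈ W) →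
      W = ⊥ ∨ W = ⊤ := by
  intro W hWinv
  by_cases hbot : W = ⊥
  · exact Or.inl hbot
  right
  set a := zeta (4 * n) ^ 2 with ha
  set b := zeta (4 * m) ^ 2 with hb
  have ha0 : a ≠ 0 := pow_ne_zero _ (zeta_ne_zero _)
  have hb0 : b ≠ 0 := pow_ne_zero _ (zeta_ne_zero _)
  have hane : a ≠ a⁻¹ := pow_sq_ne_inv hn
  have hbne : b ≠ b⁻¹ := pow_sq_ne_inv hm
  have hCn : Cmat n = Matrix.diagonal ![Complex.I, -Complex.I] := Cmat_eq n (by omega)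
  have hCm : Cmat m = Matrix.diagonal ![Complex.I, -Complex.I] := Cmat_eq m (by omega)
  -- determinants
  have hdetA : (Amat n ⊗ₖ (1 : Matrix (Fin 2) (Fin 2) ℂ)).det ≠ 0 := by
    rw [Matrix.det_kronecker]
    simp [Amat, Matrix.det_diagonal, Fin.prod_univ_two, mul_inv_cancel₀ ha0, zeta_ne_zero]
  have hdetB : ((1 : Matrix (Fin 2) (Fin 2) ℂ) ⊗ₖ Amat m).det ≠ 0 := by
    rw [Matrix.det_kronecker]
    simp [Amat, Matrix.det_diagonal, Fin.prod_univ_two, mul_inv_cancel₀ hb0, zeta_ne_zero]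
  have hdetJ : (Jmat).det ≠ 0 := by
    simp [Jmat, Matrix.det_fin_two_of]
  have hdetC : (Cmat n).det ≠ 0 := by
    simp [hCn, Matrix.det_diagonal, Fin.prod_univ_two, Complex.I_ne_zero]
  have hdetC' : (Cmat m).det ≠ 0 := by
    simp [hCm, Matrix.det_diagonal, Fin.prod_univ_two, Complex.I_ne_zero]
  have hdetCJ : (Cmat n ⊗ₖ Jmat).det ≠ 0 := by
    rw [Matrix.det_kronecker]
    exact mul_ne_zero (pow_ne_zero _ hdetC) (pow_ne_zero _ hdetJ)
  have hdetJD : (Jmat ⊗ₖ Cmat m).det ≠ 0 := by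
    rw [Matrix.det_kronecker]
    exact mul_ne_zero (pow_ne_zero _ hdetJ) (pow_ne_zero _ hdetC')
  -- the generators as elements of the group
  have hA : ∀ v ∈ W, (Amat n ⊗ₖ (1 : Matrix (Fin 2) (Fin 2) ℂ)) *ᵥ v ∈ W := by
    intro v hv
    exact hWinv (Matrix.GeneralLinearGroup.mkOfDetNeZero _ hdetA)
      (Subgroup.subset_closure (Or.inl rfl)) v hv
  have hB : ∀ v ∈ W, ((1 : Matrix (Fin 2) (Fin 2) ℂ) ⊗ₖ Amat m) *ᵥ v ∈ W := by
    intro v hv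
    exact hWinv (Matrix.GeneralLinearGroup.mkOfDetNeZero _ hdetB)
      (Subgroup.subset_closure (Or.inr (Or.inl rfl))) v hv
  have hCJ : ∀ v ∈ W, (Cmat n ⊗ₖ Jmat) *ᵥ v ∈ W := by
    intro v hv
    exact hWinv (Matrix.GeneralLinearGroup.mkOfDetNeZero _ hdetCJ)
      (Subgroup.subset_closure (Or.inr (Or.inr (Or.inl rfl)))) v hv
  have hJD : ∀ v ∈ W, (Jmat ⊗ₖ Cmat m) *ᵥ v ∈ W := by
    intro v hv
    exact hWinv (Matrix.GeneralLinearGroup.mkOfDetNeZero _ hdetJD)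
      (Subgroup.subset_closure (Or.inr (Or.inr (Or.inr rfl)))) v hv
  -- a nonzero vector
  obtain ⟨v, hvW, hv0⟩ := (Submodule.ne_bot_iff W).mp hbot
  obtain ⟨p, hp⟩ := Function.ne_iff.mp hv0
  have hp : v p ≠ 0 := by simpa using hp
  set da : Fin 2 → ℂ := ![a, a⁻¹] with hda'
  set db : Fin 2 → ℂ := ![b, b⁻¹] with hdb'
  have hAdiag : Amat n ⊗ₖ (1 : Matrix (Fin 2) (Fin 2) ℂ)
      = Matrix.diagonal (fun q : Fin 2 × Fin 2 => da q.1) := by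
    rw [Amat, ← Matrix.diagonal_one, Matrix.diagonal_kronecker_diagonal]
    congr 1
    funext q
    simp [hda', ha]
  have hBdiag : (1 : Matrix (Fin 2) (Fin 2) ℂ) ⊗ₖ Amat m
      = Matrix.diagonal (fun q : Fin 2 × Fin 2 => db q.2) := by
    rw [Amat, ← Matrix.diagonal_one, Matrix.diagonal_kronecker_diagonal]
    congr 1
    funext q
    simp [hdb', hb]
  have hstepA : ∀ w ∈ W, ∀ lam : ℂ, (fun q : Fin 2 × Fin 2 => (da q.1 - lam) * w q) ∈ W := by
    intro w hw lam
    have h1 := hA w hw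
    rw [hAdiag] at h1
    have he : (fun q : Fin 2 × Fin 2 => (da q.1 - lam) * w q)
        = (Matrix.diagonal (fun q : Fin 2 × Fin 2 => da q.1)) *ᵥ w - lam • w := by
      funext q
      simp [Matrix.mulVec_diagonal]
      ring
    rw [he]
    exact Submodule.sub_mem _ h1 (W.smul_mem _ hw)
  have hstepB : ∀ w ∈ W, ∀ lam : ℂ, (fun q : Fin 2 × Fin 2 => (db q.2 - lam) * w q) ∈ W := by
    intro w hw lam
    have h1 := hB w hw
    rw [hBdiag] at h1
    have he : (fun q : Fin 2 × Fin 2 => (db q.2 - lam) * w q)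
        = (Matrix.diagonal (fun q : Fin 2 × Fin 2 => db q.2)) *ᵥ w - lam • w := by
      funext q
      simp [Matrix.mulVec_diagonal]
      ring
    rw [he]
    exact Submodule.sub_mem _ h1 (W.smul_mem _ hw)
  have hfin : ∀ x y : Fin 2, x ≠ y → x = y + 1 := by decide
  have hdane : ∀ x : Fin 2, da x - da (x + 1) ≠ 0 := by
    intro x
    fin_cases x
    · simpa [hda', sub_ne_zero] using hane
    · simpa [hda', sub_ne_zero] using Ne.symm hane
  have hdbne : ∀ x : Fin 2, db x - db (x + 1) ≠ 0 := by
    intro x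
    fin_cases x
    · simpa [hdb', sub_ne_zero] using hbne
    · simpa [hdb', sub_ne_zero] using Ne.symm hbne
  -- isolate the coordinate p
  have hw2W : (fun q : Fin 2 × Fin 2 => (db q.2 - db (p.2 + 1)) * ((da q.1 - da (p.1 + 1)) * v q)) ∈ W :=
    hstepB _ (hstepA v hvW (da (p.1 + 1))) (db (p.2 + 1))
  have hc0 : (db p.2 - db (p.2 + 1)) * ((da p.1 - da (p.1 + 1)) * v p) ≠ 0 :=
    mul_ne_zero (hdbne p.2) (mul_ne_zero (hdane p.1) hp)
  have hw2single : (fun q : Fin 2 × Fin 2 => (db q.2 - db (p.2 + 1)) * ((da q.1 - da (p.1 + 1)) * v q))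
      = Pi.single p ((db p.2 - db (p.2 + 1)) * ((da p.1 - da (p.1 + 1)) * v p)) := by
    funext q
    by_cases hq : q = p
    · subst hq
      simp [Pi.single_apply]
    · have hor : q.1 ≠ p.1 ∨ q.2 ≠ p.2 := by
        by_contra hcon
        push_neg at hcon
        exact hq (Prod.ext hcon.1 hcon.2)
      rcases hor with h | h
      · simp [Pi.single_apply, hq, hfin _ _ h]
      · simp [Pi.single_apply, hq, hfin _ _ h]
  have hsingleW : Pi.single p (1 : ℂ) ∈ W :=
    single_one_mem_of_single_mem hc0 (hw2single ▸ hw2W)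
  -- flipping coordinates using C ⊗ J and J ⊗ D
  have hflip2 : ∀ i j : Fin 2, Pi.single (i, j) (1 : ℂ) ∈ W → Pi.single (i, j + 1) (1 : ℂ) ∈ W := by
    intro i j h
    have hm' := hCJ _ h
    fin_cases i <;> fin_cases j
    · show Pi.single ((0 : Fin 2), (1 : Fin 2)) (1 : ℂ) ∈ W
      refine single_one_mem_of_single_mem (s := -Complex.I) (by simp [Complex.I_ne_zero]) ?_
      have he : (Cmat n ⊗ₖ Jmat) *ᵥ Pi.single ((0 : Fin 2), (0 : Fin 2)) (1 : ℂ)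
          = Pi.single ((0 : Fin 2), (1 : Fin 2)) (-Complex.I) := by
        funext q
        fin_cases q <;>
          simp [hCn, Jmat, Matrix.mulVec, dotProduct, Fintype.sum_prod_type, Fin.sum_univ_two,
            Matrix.kroneckerMap_apply, Matrix.diagonal, Pi.single_apply]
      exact he ▸ hm'
    · show Pi.single ((0 : Fin 2), (0 : Fin 2)) (1 : ℂ) ∈ W
      refine single_one_mem_of_single_mem (s := Complex.I) Complex.I_ne_zero ?_
      have he : (Cmat n ⊗ₖ Jmat) *ᵥ Pi.single ((0 : Fin 2), (1 : Fin 2)) (1 : ℂ)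
          = Pi.single ((0 : Fin 2), (0 : Fin 2)) (Complex.I) := by
        funext q
        fin_cases q <;>
          simp [hCn, Jmat, Matrix.mulVec, dotProduct, Fintype.sum_prod_type, Fin.sum_univ_two,
            Matrix.kroneckerMap_apply, Matrix.diagonal, Pi.single_apply]
      exact he ▸ hm'
    · show Pi.single ((1 : Fin 2), (1 : Fin 2)) (1 : ℂ) ∈ W
      refine single_one_mem_of_single_mem (s := Complex.I) Complex.I_ne_zero ?_
      have he : (Cmat n ⊗ₖ Jmat) *ᵥ Pi.single ((1 : Fin 2), (0 : Fin 2)) (1 : ℂ)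
          = Pi.single ((1 : Fin 2), (1 : Fin 2)) (Complex.I) := by
        funext q
        fin_cases q <;>
          simp [hCn, Jmat, Matrix.mulVec, dotProduct, Fintype.sum_prod_type, Fin.sum_univ_two,
            Matrix.kroneckerMap_apply, Matrix.diagonal, Pi.single_apply]
      exact he ▸ hm'
    · show Pi.single ((1 : Fin 2), (0 : Fin 2)) (1 : ℂ) ∈ W
      refine single_one_mem_of_single_mem (s := -Complex.I) (by simp [Complex.I_ne_zero]) ?_
      have he : (Cmat n ⊗ₖ Jmat) *ᵥ Pi.single ((1 : Fin 2), (1 : Fin 2)) (1 : ℂ)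
          = Pi.single ((1 : Fin 2), (0 : Fin 2)) (-Complex.I) := by
        funext q
        fin_cases q <;>
          simp [hCn, Jmat, Matrix.mulVec, dotProduct, Fintype.sum_prod_type, Fin.sum_univ_two,
            Matrix.kroneckerMap_apply, Matrix.diagonal, Pi.single_apply]
      exact he ▸ hm'
  have hflip1 : ∀ i j : Fin 2, Pi.single (i, j) (1 : ℂ) ∈ W → Pi.single (i + 1, j) (1 : ℂ) ∈ W := by
    intro i j h
    have hm' := hJD _ h
    fin_cases i <;> fin_cases j
    · show Pi.single ((1 : Fin 2), (0 : Fin 2)) (1 : ℂ) ∈ W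
      refine single_one_mem_of_single_mem (s := -Complex.I) (by simp [Complex.I_ne_zero]) ?_
      have he : (Jmat ⊗ₖ Cmat m) *ᵥ Pi.single ((0 : Fin 2), (0 : Fin 2)) (1 : ℂ)
          = Pi.single ((1 : Fin 2), (0 : Fin 2)) (-Complex.I) := by
        funext q
        fin_cases q <;>
          simp [hCm, Jmat, Matrix.mulVec, dotProduct, Fintype.sum_prod_type, Fin.sum_univ_two,
            Matrix.kroneckerMap_apply, Matrix.diagonal, Pi.single_apply]
      exact he ▸ hm'
    · show Pi.single ((1 : Fin 2), (1 : Fin 2)) (1 : ℂ) ∈ W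
      refine single_one_mem_of_single_mem (s := Complex.I) Complex.I_ne_zero ?_
      have he : (Jmat ⊗ₖ Cmat m) *ᵥ Pi.single ((0 : Fin 2), (1 : Fin 2)) (1 : ℂ)
          = Pi.single ((1 : Fin 2), (1 : Fin 2)) (Complex.I) := by
        funext q
        fin_cases q <;>
          simp [hCm, Jmat, Matrix.mulVec, dotProduct, Fintype.sum_prod_type, Fin.sum_univ_two,
            Matrix.kroneckerMap_apply, Matrix.diagonal, Pi.single_apply]
      exact he ▸ hm'
    · show Pi.single ((0 : Fin 2), (0 : Fin 2)) (1 : ℂ) ∈ W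
      refine single_one_mem_of_single_mem (s := Complex.I) Complex.I_ne_zero ?_
      have he : (Jmat ⊗ₖ Cmat m) *ᵥ Pi.single ((1 : Fin 2), (0 : Fin 2)) (1 : ℂ)
          = Pi.single ((0 : Fin 2), (0 : Fin 2)) (Complex.I) := by
        funext q
        fin_cases q <;>
          simp [hCm, Jmat, Matrix.mulVec, dotProduct, Fintype.sum_prod_type, Fin.sum_univ_two,
            Matrix.kroneckerMap_apply, Matrix.diagonal, Pi.single_apply]
      exact he ▸ hm'
    · show Pi.single ((0 : Fin 2), (1 : Fin 2)) (1 : ℂ) ∈ W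
      refine single_one_mem_of_single_mem (s := -Complex.I) (by simp [Complex.I_ne_zero]) ?_
      have he : (Jmat ⊗ₖ Cmat m) *ᵥ Pi.single ((1 : Fin 2), (1 : Fin 2)) (1 : ℂ)
          = Pi.single ((0 : Fin 2), (1 : Fin 2)) (-Complex.I) := by
        funext q
        fin_cases q <;>
          simp [hCm, Jmat, Matrix.mulVec, dotProduct, Fintype.sum_prod_type, Fin.sum_univ_two,
            Matrix.kroneckerMap_apply, Matrix.diagonal, Pi.single_apply]
      exact he ▸ hm'
  -- all standard basis vectors lie in W
  have hsingleW' : Pi.single (p.1, p.2) (1 : ℂ) ∈ W := by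
    have : (p.1, p.2) = p := Prod.mk.eta
    rw [this]
    exact hsingleW
  have h1 := hflip2 p.1 p.2 hsingleW'
  have h2 := hflip1 p.1 p.2 hsingleW'
  have h3 := hflip1 p.1 (p.2 + 1) h1
  have hall : ∀ q : Fin 2 × Fin 2, Pi.single q (1 : ℂ) ∈ W := by
    rintro ⟨i, j⟩
    by_cases e1 : i = p.1 <;> by_cases e2 : j = p.2
    · rw [e1, e2]; exact hsingleW'
    · rw [e1, hfin _ _ e2]; exact h1
    · rw [hfin _ _ e1, e2]; exact h2
    · rw [hfin _ _ e1, hfin _ _ e2]; exact h3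
  rw [Submodule.eq_top_iff']
  intro v'
  have hv' : v' = ∑ q : Fin 2 × Fin 2, v' q • (Pi.single q (1 : ℂ) : Fin 2 × Fin 2 → ℂ) := by
    funext r
    rw [Finset.sum_apply]
    simp [Pi.single_apply]
  rw [hv']
  exact Submodule.sum_mem _ fun q _ => W.smul_mem _ (hall q)

/-- For odd `m, n ≥ 3`, the group generated by `A ⊗ I`, `I ⊗ B`, `C ⊗ D`, `J ⊗ J`
acts reducibly on `ℂ⁴ = ℂ² ⊗ ℂ²` — it preserves `span{e₁⊗e₂, e₂⊗e₁}` and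
`span{e₁⊗e₁, e₂⊗e₂}` — while the group generated by `A ⊗ I`, `I ⊗ B`, `C ⊗ J`, `J ⊗ D`
acts irreducibly. -/
theorem stmt_14 (m n : ℕ) (hm : 3 ≤ m) (hn : 3 ≤ n) (hmodd : Odd m) (hnodd : Odd n) :
    (∀ g ∈ intransGroup m n, ∀ v ∈ Submodule.span ℂ
        {Pi.single ((0 : Fin 2), (1 : Fin 2)) (1 : ℂ), Pi.single ((1 : Fin 2), (0 : Fin 2)) 1},
      Matrix.mulVec (g : Matrix (Fin 2 × Fin 2) (Fin 2 × Fin 2) ℂ) v ∈ Submodule.span ℂ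
        {Pi.single ((0 : Fin 2), (1 : Fin 2)) (1 : ℂ), Pi.single ((1 : Fin 2), (0 : Fin 2)) 1}) ∧
    (∀ g ∈ intransGroup m n, ∀ v ∈ Submodule.span ℂ
        {Pi.single ((0 : Fin 2), (0 : Fin 2)) (1 : ℂ), Pi.single ((1 : Fin 2), (1 : Fin 2)) 1},
      Matrix.mulVec (g : Matrix (Fin 2 × Fin 2) (Fin 2 × Fin 2) ℂ) v ∈ Submodule.span ℂ
        {Pi.single ((0 : Fin 2), (0 : Fin 2)) (1 : ℂ), Pi.single ((1 : Fin 2), (1 : Fin 2)) 1}) ∧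
    ¬ (∀ W : Submodule ℂ (Fin 2 × Fin 2 → ℂ),
        (∀ g ∈ intransGroup m n, ∀ v ∈ W,
          Matrix.mulVec (g : Matrix (Fin 2 × Fin 2) (Fin 2 × Fin 2) ℂ) v ∈ W) →
        W = ⊥ ∨ W = ⊤) ∧
    (∀ W : Submodule ℂ (Fin 2 × Fin 2 → ℂ),
      (∀ g ∈ transGroup m n, ∀ v ∈ W,
        Matrix.mulVec (g : Matrix (Fin 2 × Fin 2) (Fin 2 × Fin 2) ℂ) v ∈ W) →
      W = ⊥ ∨ W = ⊤) := by
  refine ⟨fun g hg => intrans_le_stab_offdiag m n hg, fun g hg => intrans_le_stab_diag m n hg,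
    ?_, ?_⟩
  · -- part 3: the offdiagonal span is a nontrivial proper invariant subspace
    intro hcon
    rcases hcon _ (fun g hg => intrans_le_stab_offdiag m n hg) with hbot | htop
    · have : Pi.single ((0 : Fin 2), (1 : Fin 2)) (1 : ℂ) ∈ Submodule.span ℂ
          ({Pi.single ((0 : Fin 2), (1 : Fin 2)) (1 : ℂ), Pi.single ((1 : Fin 2), (0 : Fin 2)) 1} : Set V4) :=
        Submodule.subset_span (Set.mem_insert _ _)
      rw [hbot, Submodule.mem_bot] at this
      have := congrFun this ((0 : Fin 2), (1 : Fin 2))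
      simp at this
    · have : Pi.single ((0 : Fin 2), (0 : Fin 2)) (1 : ℂ) ∈ Submodule.span ℂ
          ({Pi.single ((0 : Fin 2), (1 : Fin 2)) (1 : ℂ), Pi.single ((1 : Fin 2), (0 : Fin 2)) 1} : Set V4) := by
        rw [htop]; trivial
      rw [mem_span_offdiag] at this
      simp at this
  · -- part 4: irreducibility of the trans group
    exact trans_irred m n hm hn
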